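/- Let E be a real inner product space, let p, q, r : ℤ → ℝ and V : ℤ → E be arbitrary sequences, and define the operator S on sequences W : ℤ → E by (SW)_n := p_n W_{n−1} − p_{n+1} W_{n+1} − q_n ⟨V_n, W_{n−1}⟩ V_{n−1} + q_{n+1} ⟨V_n, W_{n+1}⟩ V_{n+1} + r_n (⟨V_{n−1}, W_n⟩ V_{n+1} − ⟨V_{n+1}, W_n⟩ V_{n−1}). Then S is skew-symmetric with respect to the pairing Σ_n ⟨·,·⟩: for all finitely supported sequences U, W : ℤ → E, Σ_{n∈ℤ} ⟨U_n, (SW)_n⟩ = − Σ_{n∈ℤ} ⟨W_n, (SU)_n⟩. -/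

import Mathlib

/-- the operator
`S = pT⁻¹ − p₁T − qV₋₁V^⊤T⁻¹ + q₁V₁V^⊤T + r(V₁V₋₁^⊤ − V₋₁V₁^⊤)`
is skew-symmetric with respect to the pairing `∑ₙ ⟨·,·⟩`. -/
theorem presymplectic_operator_skew_symmetric
    (E : Type*) [NormedAddCommGroup E] [InnerProductSpace ℝ E]
    (p q r : ℤ → ℝ) (V : ℤ → E)
    (S : (ℤ → E) → ℤ → E)
    (hS : ∀ (W : ℤ → E) (n : ℤ), S W n =
      p n • W (n-1) - p (n+1) • W (n+1)
        - (q n * (inner ℝ (V n) (W (n-1)) : ℝ)) • V (n-1)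
        + (q (n+1) * (inner ℝ (V n) (W (n+1)) : ℝ)) • V (n+1)
        + r n • ((inner ℝ (V (n-1)) (W n) : ℝ) • V (n+1)
            - (inner ℝ (V (n+1)) (W n) : ℝ) • V (n-1))) :
    ∀ U W : ℤ → E, {n : ℤ | U n ≠ 0}.Finite → {n : ℤ | W n ≠ 0}.Finite →
      (∑ᶠ n : ℤ, (inner ℝ (U n) (S W n) : ℝ))
        = - ∑ᶠ n : ℤ, (inner ℝ (W n) (S U n) : ℝ) := by
  intro U W hU hW
  set a : ℤ → ℝ := fun n => p n * ((inner ℝ (U n) (W (n-1)) : ℝ) + (inner ℝ (W n) (U (n-1)) : ℝ)) with ha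
  set b : ℤ → ℝ := fun n => q n * ((inner ℝ (V n) (W (n-1)) : ℝ) * (inner ℝ (U n) (V (n-1)) : ℝ)
      + (inner ℝ (V n) (U (n-1)) : ℝ) * (inner ℝ (W n) (V (n-1)) : ℝ)) with hb
  have key : ∀ n : ℤ, (inner ℝ (U n) (S W n) : ℝ) + (inner ℝ (W n) (S U n) : ℝ)
      = (a n - a (n+1)) - (b n - b (n+1)) := by
    intro n
    simp only [ha, hb, hS, inner_sub_right, inner_add_right, inner_smul_right,
      add_sub_cancel_right]
    rw [real_inner_comm (U n) (W (n+1)), real_inner_comm (W n) (U (n+1)),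
        real_inner_comm (V n) (W (n+1)), real_inner_comm (U n) (V (n+1)),
        real_inner_comm (V n) (U (n+1)), real_inner_comm (W n) (V (n+1)),
        real_inner_comm (V (n-1)) (W n), real_inner_comm (V (n-1)) (U n)]
    ring
  have hUW : ({n : ℤ | U n ≠ 0} ∪ {n : ℤ | W n ≠ 0}).Finite := hU.union hW
  have hsa : (Function.support a).Finite := hUW.subset (fun n hn => by
    simp only [Function.mem_support, ha] at hn
    by_contra hc
    simp only [Set.mem_union, Set.mem_setOf_eq, not_or, not_not] at hc
    exact hn (by rw [hc.1, hc.2]; simp))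
  have hsb : (Function.support b).Finite := hUW.subset (fun n hn => by
    simp only [Function.mem_support, hb] at hn
    by_contra hc
    simp only [Set.mem_union, Set.mem_setOf_eq, not_or, not_not] at hc
    exact hn (by rw [hc.1, hc.2]; simp))
  have hsa' : (Function.support fun n => a (n+1)).Finite := by
    have : (Function.support fun n => a (n+1)) = (fun n : ℤ => n + 1) ⁻¹' Function.support a := rfl
    rw [this]
    exact hsa.preimage (fun x _ y _ h => by omega)
  have hsb' : (Function.support fun n => b (n+1)).Finite := by
    have : (Function.support fun n => b (n+1)) = (fun n : ℤ => n + 1) ⁻¹' Function.support b := rfl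
    rw [this]
    exact hsb.preimage (fun x _ y _ h => by omega)
  have hshift : ∀ f : ℤ → ℝ, (∑ᶠ n : ℤ, f (n+1)) = ∑ᶠ n : ℤ, f n := fun f =>
    finsum_comp_equiv (Equiv.addRight (1:ℤ))
  have hfU : (Function.support fun n => (inner ℝ (U n) (S W n) : ℝ)).Finite :=
    hU.subset (fun n hn => by
      simp only [Function.mem_support] at hn
      by_contra hc
      simp only [Set.mem_setOf_eq, not_not] at hc
      exact hn (by rw [hc]; simp))
  have hfW : (Function.support fun n => (inner ℝ (W n) (S U n) : ℝ)).Finite :=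
    hW.subset (fun n hn => by
      simp only [Function.mem_support] at hn
      by_contra hc
      simp only [Set.mem_setOf_eq, not_not] at hc
      exact hn (by rw [hc]; simp))
  have h0 : (∑ᶠ n : ℤ, (inner ℝ (U n) (S W n) : ℝ)) + ∑ᶠ n : ℤ, (inner ℝ (W n) (S U n) : ℝ) = 0 := by
    rw [← finsum_add_distrib hfU hfW, finsum_congr key,
        finsum_sub_distrib (hsa.union hsa' |>.subset (Function.support_sub _ _))
          (hsb.union hsb' |>.subset (Function.support_sub _ _)),
        finsum_sub_distrib hsa hsa', finsum_sub_distrib hsb hsb',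
        hshift a, hshift b]
    ring
  linarith
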